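/- The disjoint union poset P₁ = (⋃_{n∈ω} 1) ∪ ω, i.e., countably many singletons together with one chain of type ω, is not reversible. -/

import Mathlib

/-- A poset is reversible iff every bijective homomorphism (monotone bijection) of it to
itself is an automorphism (i.e. its inverse is also monotone). -/
def Reversible (P : Type*) [PartialOrder P] : Prop :=
  ∀ f : P → P, Function.Bijective f → Monotone f → ∀ x y : P, f x ≤ f y → x ≤ y

noncomputable section
namespace Stmt16Aux

open Ordinal

abbrev T (o : Option ℕ) : Type := (cond o.isSome 1 Ordinal.omega0.{0}).ToType

def g : Set.Iio Ordinal.omega0.{0} ≃o Ordinal.omega0.ToType := Ordinal.ToType.mk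

def e (n : ℕ) : Ordinal.omega0.ToType := g ⟨n, nat_lt_omega0 n⟩

lemma e_strictMono : StrictMono e := fun m n h => by
  exact g.strictMono ((Nat.cast_lt (α := Ordinal.{0})).2 h)

lemma e_bij : Function.Bijective e := by
  refine ⟨e_strictMono.injective, fun x => ?_⟩
  obtain ⟨⟨a, ha⟩, hx⟩ := g.surjective x
  obtain ⟨n, rfl⟩ := lt_omega0.mp ha
  exact ⟨n, hx⟩

def E : Ordinal.omega0.ToType ≃ ℕ := (Equiv.ofBijective e e_bij).symm

@[simp] lemma e_E (x) : e (E x) = x := (Equiv.ofBijective e e_bij).apply_symm_apply x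
@[simp] lemma E_e (n) : E (e n) = n := (Equiv.ofBijective e e_bij).symm_apply_apply n

instance sub1 (n : ℕ) : Subsingleton (T (some n)) := by
  rw [← Cardinal.le_one_iff_subsingleton]
  show Cardinal.mk (1 : Ordinal.{0}).ToType ≤ 1
  rw [Cardinal.mk_toType]; simp

def s : (1 : Ordinal.{0}).ToType := Ordinal.ToType.mk ⟨0, by simp⟩

def f : (Σ o : Option ℕ, T o) → (Σ o : Option ℕ, T o)
  | ⟨none, x⟩ => ⟨none, e (E x + 1)⟩
  | ⟨some 0, _⟩ => ⟨none, e 0⟩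
  | ⟨some (n+1), _⟩ => ⟨some n, s⟩

def finv : (Σ o : Option ℕ, T o) → (Σ o : Option ℕ, T o)
  | ⟨none, x⟩ => if h : E x = 0 then ⟨some 0, s⟩ else ⟨none, e (E x - 1)⟩
  | ⟨some n, _⟩ => ⟨some (n+1), s⟩

lemma left_inv : Function.LeftInverse finv f := by
  rintro ⟨(_|(_|n)), x⟩ <;> simp [f, finv]
  · exact Subsingleton.elim _ _
  · exact Subsingleton.elim _ _

lemma right_inv : Function.RightInverse finv f := by
  rintro ⟨(_|n), x⟩
  · by_cases h : E x = 0 <;> simp [f, finv, h]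
    · rw [← h]; simp
    · have : E x - 1 + 1 = E x := Nat.succ_pred_eq_of_pos (Nat.pos_of_ne_zero h)
      rw [this]; simp
  · simp [f, finv]
    exact Subsingleton.elim _ _

lemma f_mono : Monotone f := by
  rintro ⟨i, a⟩ ⟨j, b⟩ hab
  rw [Sigma.le_def] at hab
  obtain ⟨h, hle⟩ := hab
  cases h
  simp at hle
  match i with
  | none =>
      simp only [f]
      have hE : E a ≤ E b := by
        rw [← e_strictMono.le_iff_le]; simpa using hle
      exact Sigma.mk_le_mk_iff.2 (e_strictMono.monotone (by omega))
  | some 0 => have : a = b := Subsingleton.elim _ _; subst this; exact le_refl _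
  | some (n+1) => have : a = b := Subsingleton.elim _ _; subst this; exact le_refl _


end Stmt16Aux
end

open Stmt16Aux in
/-- The disjoint union poset P₁ = (⋃_{n∈ω} 1) ∪ ω, consisting of countably
many singleton chains (indexed by `some n`) together with one chain of type ω (indexed by
`none`), is not reversible. -/
theorem stmt16 :
    ¬ Reversible (Σ o : Option ℕ, (cond o.isSome 1 Ordinal.omega0.{0}).ToType) := by
  intro hrev
  have hb : Function.Bijective f :=
    Function.bijective_iff_has_inverse.2 ⟨finv, left_inv, right_inv⟩
  have hle : f ⟨some 0, s⟩ ≤ f ⟨none, e 0⟩ := by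
    show (⟨none, e 0⟩ : Σ o : Option ℕ, T o) ≤ ⟨none, e (E (e 0) + 1)⟩
    exact Sigma.mk_le_mk_iff.2 (e_strictMono.monotone (by simp))
  have := hrev f hb f_mono _ _ hle
  rw [Sigma.le_def] at this
  obtain ⟨h, -⟩ := this
  simp at h
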